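/- Under the hypotheses of the majorization principle — X a real Banach space, x₀ ∈ X, R > 0, A satisfying the variable Lipschitz condition on B[x₀,R] with continuous nonnegative k, a = ‖A x₀ − x₀‖, a₊(r) = a + ∫₀^r k(t) dt having smallest fixed point r* in [0,R] — let x* be the fixed point of A obtained as the limit of x_{n+1} = A x_n from x₀, and let r_n be defined by r₀ = 0, r_{n+1} = a₊(r_n). Let ξ₀ ∈ B[x₀,R] with ρ₀ = ‖ξ₀ − x₀‖ and assume either ρ₀ ≤ r* or a₊(s) < s for all s with r* < s ≤ ρ₀; set ρ_{n+1} = a₊(ρ_n) and ξ_{n+1} = A ξ_n. Then for all n the a priori error estimate ‖x* − ξ_n‖ ≤ r* + ρ_n − 2 r_n holds. -/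

import Mathlib

open Set Filter intervalIntegral

/-- Core segment estimate: under the variable Lipschitz condition, the image of the
segment from `u` to `v` is controlled by `∫ k`. -/
lemma seg_core {X : Type*} [NormedAddCommGroup X] [NormedSpace ℝ X]
    (x₀ : X) (R : ℝ) (A : X → X) (k : ℝ → ℝ) (hk : Continuous k)
    (hk0 : ∀ t, 0 ≤ k t)
    (hLip : ∀ x₁ x₂ : X, ∀ r : ℝ, ‖x₁ - x₀‖ ≤ r → ‖x₂ - x₀‖ ≤ r →
      0 < r → r ≤ R → ‖A x₁ - A x₂‖ ≤ k r * ‖x₁ - x₂‖)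
    (u v : X) (p q : ℝ) (hp : 0 ≤ p) (hpq : p ≤ q) (hqR : q ≤ R)
    (hu : ‖u - x₀‖ ≤ p) (hv : ‖v - x₀‖ ≤ q) (huv : ‖v - u‖ ≤ q - p) :
    ‖A v - A u‖ ≤ ∫ t in p..q, k t := by
  rcases eq_or_lt_of_le hpq with heq | hlt
  · subst heq
    have hvu : v = u := by
      have h0 : ‖v - u‖ = 0 := le_antisymm (by simpa using huv) (norm_nonneg _)
      exact sub_eq_zero.mp (norm_eq_zero.mp h0)
    simp [hvu]
  · set w : ℝ → X := fun t => u + ((t - p) / (q - p)) • (v - u) with hw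
    set g : ℝ → ℝ := fun t => ‖A (w t) - A u‖ with hg
    have hqp : 0 < q - p := sub_pos.mpr hlt
    have hw_mem : ∀ t ∈ Icc p q, ‖w t - x₀‖ ≤ t := by
      intro t ht
      have hs0 : 0 ≤ (t - p) / (q - p) := div_nonneg (by linarith [ht.1]) hqp.le
      have : w t - x₀ = (u - x₀) + ((t - p) / (q - p)) • (v - u) := by
        simp [hw]; abel
      rw [this]
      calc ‖(u - x₀) + ((t - p) / (q - p)) • (v - u)‖
          ≤ ‖u - x₀‖ + ‖((t - p) / (q - p)) • (v - u)‖ := norm_add_le _ _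
        _ ≤ p + ((t - p) / (q - p)) * (q - p) := by
            rw [norm_smul, Real.norm_eq_abs, abs_of_nonneg hs0]
            exact add_le_add hu (mul_le_mul_of_nonneg_left huv hs0)
        _ = t := by field_simp; ring
    have hw_dist : ∀ t z : ℝ, t ≤ z → ‖w z - w t‖ ≤ z - t := by
      intro t z htz
      have : w z - w t = ((z - t) / (q - p)) • (v - u) := by
        simp only [hw]
        rw [add_sub_add_left_eq_sub, ← sub_smul, div_sub_div_same]
        congr 2
        ring
      rw [this, norm_smul, Real.norm_eq_abs,
        abs_of_nonneg (div_nonneg (by linarith) hqp.le)]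
      calc (z - t) / (q - p) * ‖v - u‖ ≤ (z - t) / (q - p) * (q - p) :=
            mul_le_mul_of_nonneg_left huv (div_nonneg (by linarith) hqp.le)
        _ = z - t := by field_simp
    have hRpos : 0 < R := lt_of_lt_of_le (lt_of_le_of_lt hp hlt) hqR
    -- continuity of g on [p,q]
    have hg_cont : ContinuousOn g (Icc p q) := by
      have hlip : LipschitzOnWith (Real.toNNReal (k R)) g (Icc p q) := by
        apply LipschitzOnWith.of_dist_le_mul
        intro t ht z hz
        rw [Real.dist_eq, Real.dist_eq]
        have key : ∀ s1 s2, s1 ∈ Icc p q → s2 ∈ Icc p q → s2 ≤ s1 →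
            |g s1 - g s2| ≤ Real.toNNReal (k R) * |s1 - s2| := by
          intro s1 s2 hs1 hs2 hle
          have h1 : |g s1 - g s2| ≤ ‖A (w s1) - A (w s2)‖ := by
            have := abs_norm_sub_norm_le (A (w s1) - A u) (A (w s2) - A u)
            simpa [hg, sub_sub_sub_cancel_right] using this
          have h2 : ‖A (w s1) - A (w s2)‖ ≤ k R * ‖w s1 - w s2‖ :=
            hLip _ _ R (le_trans (hw_mem _ hs1) (le_trans hs1.2 hqR))
              (le_trans (hw_mem _ hs2) (le_trans hs2.2 hqR)) hRpos le_rfl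
          have h3 : ‖w s1 - w s2‖ ≤ |s1 - s2| := by
            rw [abs_of_nonneg (by linarith)]
            exact hw_dist _ _ hle
          calc |g s1 - g s2| ≤ k R * ‖w s1 - w s2‖ := le_trans h1 h2
            _ ≤ k R * |s1 - s2| := mul_le_mul_of_nonneg_left h3 (hk0 R)
            _ = Real.toNNReal (k R) * |s1 - s2| := by
                rw [Real.coe_toNNReal _ (hk0 R)]
        rcases le_total z t with hle | hle
        · exact key t z ht hz hle
        · rw [abs_sub_comm, abs_sub_comm t z]
          exact key z t hz ht hle
      exact hlip.continuousOn
    -- boundary function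
    set B : ℝ → ℝ := fun t => ∫ s in p..t, k s with hB
    have hB_cont : ContinuousOn B (Icc p q) :=
      (intervalIntegral.continuous_primitive (fun a b => hk.intervalIntegrable a b) p).continuousOn
    have hB' : ∀ t ∈ Ico p q, HasDerivWithinAt B (k t) (Ici t) t := fun t _ =>
      (hk.integral_hasStrictDerivAt p t).hasDerivAt.hasDerivWithinAt
    have hga : g p ≤ B p := by
      have : w p = u := by simp [hw]
      simp [hg, hB, this]
    have bound : ∀ t ∈ Ico p q, ∀ r, k t < r → ∃ᶠ z in nhdsWithin t (Ioi t), slope g t z < r := by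
      intro t ht r hr
      have h1 : ∀ᶠ z in nhdsWithin t (Ioi t), k z < r := by
        have : Tendsto k (nhdsWithin t (Ioi t)) (nhds (k t)) :=
          (hk.continuousAt).continuousWithinAt.tendsto
        exact this (Iio_mem_nhds hr)
      have h2 : Ioo t q ∈ nhdsWithin t (Ioi t) := Ioo_mem_nhdsGT_of_mem ⟨le_rfl, ht.2⟩
      refine ((h1.and (eventually_of_mem h2 fun z hz => hz)).mono ?_).frequently
      rintro z ⟨hkz, hz⟩
      have htz : t < z := hz.1
      have hzq : z ≤ q := hz.2.le
      have hz_mem : z ∈ Icc p q := ⟨le_trans ht.1 htz.le, hzq⟩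
      have ht_mem : t ∈ Icc p q := ⟨ht.1, le_trans htz.le hzq⟩
      have hslope : slope g t z ≤ k z := by
        rw [slope_def_field]
        have h1' : g z - g t ≤ ‖A (w z) - A (w t)‖ := by
          have := norm_sub_norm_le (A (w z) - A u) (A (w t) - A u)
          simpa [hg] using this
        have h2' : ‖A (w z) - A (w t)‖ ≤ k z * ‖w z - w t‖ :=
          hLip _ _ z (hw_mem _ hz_mem) (le_trans (hw_mem _ ht_mem) htz.le)
            (lt_of_le_of_lt (le_trans hp ht.1) htz) (le_trans hzq hqR)
        have h3' : ‖w z - w t‖ ≤ z - t := hw_dist _ _ htz.le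
        have : g z - g t ≤ k z * (z - t) := by
          calc g z - g t ≤ k z * ‖w z - w t‖ := le_trans h1' h2'
            _ ≤ k z * (z - t) := mul_le_mul_of_nonneg_left h3' (hk0 z)
        rw [div_le_iff₀ (by linarith)]
        linarith [this]
      exact lt_of_le_of_lt hslope hkz
    have hfin := image_le_of_liminf_slope_right_le_deriv_boundary hg_cont hga hB_cont hB' bound
      (right_mem_Icc.mpr hpq)
    have hwq : w q = v := by
      simp [hw, div_self hqp.ne']
    calc ‖A v - A u‖ = g q := by rw [hg]; simp [hwq]
      _ ≤ B q := hfin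
      _ = ∫ t in p..q, k t := rfl


/-- A priori error estimate for successive approximations from a general
initial point: `‖x* - ξ_n‖ ≤ r* + ρ_n - 2 r_n` for all `n`. -/
theorem successive_approximations_apriori_estimate
    {X : Type*} [NormedAddCommGroup X] [NormedSpace ℝ X] [CompleteSpace X]
    (x₀ : X) (R : ℝ) (hR : 0 < R) (A : X → X) (k : ℝ → ℝ)
    (hk_cont : ContinuousOn k (Set.Icc 0 R))
    (hk_nonneg : ∀ t ∈ Set.Icc (0 : ℝ) R, 0 ≤ k t)
    (hLip : ∀ x₁ x₂ : X, ∀ r : ℝ, ‖x₁ - x₀‖ ≤ r → ‖x₂ - x₀‖ ≤ r →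
      0 < r → r ≤ R → ‖A x₁ - A x₂‖ ≤ k r * ‖x₁ - x₂‖)
    (a : ℝ) (ha : a = ‖A x₀ - x₀‖)
    (aplus : ℝ → ℝ) (haplus : ∀ r : ℝ, aplus r = a + ∫ t in (0 : ℝ)..r, k t)
    (rstar : ℝ) (hrstar_mem : rstar ∈ Set.Icc (0 : ℝ) R)
    (hrstar_fix : aplus rstar = rstar)
    (hrstar_min : ∀ s ∈ Set.Icc (0 : ℝ) R, aplus s = s → rstar ≤ s)
    (r : ℕ → ℝ) (hr0 : r 0 = 0) (hr_succ : ∀ n : ℕ, r (n + 1) = aplus (r n))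
    (x : ℕ → X) (hx0 : x 0 = x₀) (hx_succ : ∀ n : ℕ, x (n + 1) = A (x n))
    (xstar : X) (hxstar_lim : Filter.Tendsto x Filter.atTop (nhds xstar))
    (hxstar_fix : A xstar = xstar)
    (ξ : ℕ → X) (hξ0 : ‖ξ 0 - x₀‖ ≤ R) (hξ_succ : ∀ n : ℕ, ξ (n + 1) = A (ξ n))
    (ρ : ℕ → ℝ) (hρ0 : ρ 0 = ‖ξ 0 - x₀‖) (hρ_succ : ∀ n : ℕ, ρ (n + 1) = aplus (ρ n))
    (hadm : ρ 0 ≤ rstar ∨ ∀ s : ℝ, rstar < s → s ≤ ρ 0 → aplus s < s) :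
    ∀ n : ℕ, ‖xstar - ξ n‖ ≤ rstar + ρ n - 2 * r n := by

  -- Extend `k` continuously to all of `ℝ` by clamping.
  set c : ℝ → ℝ := fun t => max 0 (min t R) with hc
  have hc_cont : Continuous c := continuous_const.max (continuous_id.min continuous_const)
  have hc_mem : ∀ t, c t ∈ Set.Icc (0:ℝ) R := by
    intro t
    refine ⟨le_max_left _ _, max_le hR.le (min_le_right _ _)⟩
  set k' : ℝ → ℝ := fun t => k (c t) with hk'
  have hk'_cont : Continuous k' := hk_cont.comp_continuous hc_cont hc_mem
  have hk'0 : ∀ t, 0 ≤ k' t := fun t => hk_nonneg _ (hc_mem t)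
  have hk'_eq : ∀ t ∈ Set.Icc (0:ℝ) R, k' t = k t := by
    intro t ht
    simp only [hk', hc]
    rw [min_eq_left ht.2, max_eq_right ht.1]
  have hLip' : ∀ x₁ x₂ : X, ∀ s : ℝ, ‖x₁ - x₀‖ ≤ s → ‖x₂ - x₀‖ ≤ s →
      0 < s → s ≤ R → ‖A x₁ - A x₂‖ ≤ k' s * ‖x₁ - x₂‖ := by
    intro x₁ x₂ s h1 h2 h3 h4
    rw [hk'_eq s ⟨h3.le, h4⟩]
    exact hLip x₁ x₂ s h1 h2 h3 h4
  set K : ℝ → ℝ := fun t => ∫ s in (0:ℝ)..t, k' s with hK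
  have hK_int : ∀ s t : ℝ, IntervalIntegrable k' MeasureTheory.volume s t :=
    fun s t => hk'_cont.intervalIntegrable s t
  have hK_add : ∀ s t : ℝ, K t - K s = ∫ u in s..t, k' u := by
    intro s t
    have := intervalIntegral.integral_add_adjacent_intervals (hK_int 0 s) (hK_int s t)
    simp only [hK]
    linarith [this]
  have hK_mono : Monotone K := by
    intro s t hst
    have h := hK_add s t
    have h2 : (0:ℝ) ≤ ∫ u in s..t, k' u :=
      intervalIntegral.integral_nonneg hst (fun u _ => hk'0 u)
    linarith
  have hK0 : K 0 = 0 := by simp [hK]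
  have hK_cont : Continuous K :=
    intervalIntegral.continuous_primitive (fun a b => hK_int a b) 0
  have ha0 : 0 ≤ a := ha ▸ norm_nonneg _
  have hrstar0 : 0 ≤ rstar := hrstar_mem.1
  have hrstarR : rstar ≤ R := hrstar_mem.2
  -- `aplus = a + K` on `[0, R]`
  have hapK : ∀ s, 0 ≤ s → s ≤ R → aplus s = a + K s := by
    intro s h0 hsR
    rw [haplus s]
    congr 1
    simp only [hK]
    apply intervalIntegral.integral_congr
    intro t ht
    rw [Set.uIcc_of_le h0] at ht
    exact (hk'_eq t ⟨ht.1, le_trans ht.2 hsR⟩).symm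
  have hKnonneg : ∀ s, 0 ≤ s → 0 ≤ K s := fun s hs => hK0 ▸ hK_mono hs
  -- the majorant sequence r
  have hr_bdd : ∀ n, 0 ≤ r n ∧ r n ≤ rstar := by
    intro n
    induction n with
    | zero => exact ⟨le_of_eq hr0.symm, hr0 ▸ hrstar0⟩
    | succ n ih =>
      rw [hr_succ n, hapK (r n) ih.1 (le_trans ih.2 hrstarR)]
      constructor
      · have := hKnonneg (r n) ih.1
        linarith
      · have : K (r n) ≤ K rstar := hK_mono ih.2
        have h2 := hapK rstar hrstar0 hrstarR
        rw [hrstar_fix] at h2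
        linarith
  have hr_mono : ∀ n, r n ≤ r (n + 1) := by
    intro n
    induction n with
    | zero =>
      rw [hr0, hr_succ 0, hapK (r 0) (hr_bdd 0).1 (le_trans (hr_bdd 0).2 hrstarR), hr0, hK0]
      linarith
    | succ n ih =>
      rw [hr_succ n, hr_succ (n+1),
        hapK (r n) (hr_bdd n).1 (le_trans (hr_bdd n).2 hrstarR),
        hapK (r (n+1)) (hr_bdd (n+1)).1 (le_trans (hr_bdd (n+1)).2 hrstarR)]
      have := hK_mono ih
      linarith
  have hr_mono' : Monotone r := monotone_nat_of_le_succ hr_mono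
  -- `‖x n - x₀‖ ≤ r n` and step estimates
  have hx_est : ∀ n, ‖x n - x₀‖ ≤ r n ∧ ‖x (n+1) - x n‖ ≤ r (n+1) - r n := by
    intro n
    induction n with
    | zero =>
      constructor
      · simp [hx0, hr0]
      · rw [hx_succ 0, hx0, hr_succ 0, hr0, hapK 0 le_rfl hR.le, hK0, ha]
        simp
    | succ n ih =>
      have hmem : ‖x (n+1) - x₀‖ ≤ r (n+1) := by
        calc ‖x (n+1) - x₀‖ ≤ ‖x (n+1) - x n‖ + ‖x n - x₀‖ := norm_sub_le_norm_sub_add_norm_sub _ _ _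
          _ ≤ (r (n+1) - r n) + r n := add_le_add ih.2 ih.1
          _ = r (n+1) := by ring
      refine ⟨hmem, ?_⟩
      have hseg := seg_core x₀ R A k' hk'_cont hk'0 hLip' (x n) (x (n+1))
        (r n) (r (n+1)) (hr_bdd n).1 (hr_mono n) (le_trans (hr_bdd (n+1)).2 hrstarR)
        ih.1 hmem ih.2
      have e2 : r (n+1+1) = a + K (r (n+1)) := by
        rw [hr_succ (n+1), hapK (r (n+1)) (hr_bdd (n+1)).1 (le_trans (hr_bdd (n+1)).2 hrstarR)]
      have e3 : r (n+1) = a + K (r n) := by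
        rw [hr_succ n, hapK (r n) (hr_bdd n).1 (le_trans (hr_bdd n).2 hrstarR)]
      have hnorm : ‖x (n+1+1) - x (n+1)‖ = ‖A (x (n+1)) - A (x n)‖ := by
        rw [hx_succ (n+1), hx_succ n]
      rw [hnorm]
      have hint : (∫ t in (r n)..(r (n+1)), k' t) = K (r (n+1)) - K (r n) := (hK_add _ _).symm
      have := hseg
      rw [hint] at this
      linarith
  -- `r` tends to `rstar`
  have hr_lim : Filter.Tendsto r Filter.atTop (nhds rstar) := by
    have hbdd : BddAbove (Set.range r) := ⟨rstar, by rintro _ ⟨n, rfl⟩; exact (hr_bdd n).2⟩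
    have hlim := tendsto_atTop_ciSup hr_mono' hbdd
    set L := ⨆ n, r n with hL
    have hL_le : L ≤ rstar := ciSup_le fun n => (hr_bdd n).2
    have hL0 : 0 ≤ L := le_trans (le_of_eq hr0.symm) (le_ciSup hbdd 0)
    have hfixL : a + K L = L := by
      have h1 : Filter.Tendsto (fun n => a + K (r n)) Filter.atTop (nhds (a + K L)) :=
        (continuous_const.add hK_cont).continuousAt.tendsto.comp hlim
      have h2 : Filter.Tendsto (fun n => r (n + 1)) Filter.atTop (nhds L) :=
        hlim.comp (Filter.tendsto_add_atTop_nat 1)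
      have heq : (fun n => a + K (r n)) = fun n => r (n + 1) := by
        funext n
        rw [hr_succ n, hapK (r n) (hr_bdd n).1 (le_trans (hr_bdd n).2 hrstarR)]
      rw [heq] at h1
      exact tendsto_nhds_unique h1 h2
    have : rstar ≤ L := by
      apply hrstar_min L ⟨hL0, le_trans hL_le hrstarR⟩
      rw [hapK L hL0 (le_trans hL_le hrstarR)]
      exact hfixL
    have : L = rstar := le_antisymm hL_le this
    rwa [this] at hlim
  -- telescoping estimate and limit: `‖xstar - x n‖ ≤ rstar - r n`
  have hx_tele : ∀ n d : ℕ, ‖x (n + d) - x n‖ ≤ r (n + d) - r n := by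
    intro n d
    induction d with
    | zero => simp
    | succ d ih =>
      calc ‖x (n + (d+1)) - x n‖ ≤ ‖x (n + (d+1)) - x (n + d)‖ + ‖x (n + d) - x n‖ :=
            norm_sub_le_norm_sub_add_norm_sub _ _ _
        _ ≤ (r (n + d + 1) - r (n + d)) + (r (n + d) - r n) :=
            add_le_add (hx_est (n + d)).2 ih
        _ = r (n + (d+1)) - r n := by
            rw [show n + (d+1) = (n+d)+1 from rfl]; ring
  have hxstar_est : ∀ n, ‖xstar - x n‖ ≤ rstar - r n := by
    intro n
    have h1 : Filter.Tendsto (fun m => ‖x m - x n‖) Filter.atTop (nhds ‖xstar - x n‖) :=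
      ((continuous_norm.comp (continuous_id.sub continuous_const)).continuousAt.tendsto.comp
        hxstar_lim)
    have h2 : Filter.Tendsto (fun m => r m - r n) Filter.atTop (nhds (rstar - r n)) :=
      hr_lim.sub tendsto_const_nhds
    refine le_of_tendsto_of_tendsto h1 h2 ?_
    filter_upwards [Filter.eventually_ge_atTop n] with m hm
    obtain ⟨d, rfl⟩ := Nat.exists_eq_add_of_le hm
    exact hx_tele n d
  -- the sequence ρ
  set M : ℝ := max (ρ 0) rstar with hM
  have hρ0R : ρ 0 ≤ R := hρ0 ▸ hξ0
  have hMR : M ≤ R := max_le hρ0R hrstarR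
  have hρ_bdd : ∀ n, 0 ≤ ρ n ∧ ρ n ≤ M ∧ r n ≤ ρ n := by
    intro n
    induction n with
    | zero =>
      exact ⟨hρ0 ▸ norm_nonneg _, le_max_left _ _, hr0 ▸ (hρ0 ▸ norm_nonneg _)⟩
    | succ n ih =>
      obtain ⟨h0, hMn, hrn⟩ := ih
      have hρnR : ρ n ≤ R := le_trans hMn hMR
      have heqn : ρ (n+1) = a + K (ρ n) := by rw [hρ_succ n, hapK (ρ n) h0 hρnR]
      have hfix' : a + K rstar = rstar := by
        rw [← hapK rstar hrstar0 hrstarR]; exact hrstar_fix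
      refine ⟨?_, ?_, ?_⟩
      · rw [heqn]; have := hKnonneg (ρ n) h0; linarith
      · by_cases hcase : ρ n ≤ rstar
        · have : K (ρ n) ≤ K rstar := hK_mono hcase
          rw [heqn]
          calc a + K (ρ n) ≤ a + K rstar := by linarith
            _ = rstar := hfix'
            _ ≤ M := le_max_right _ _
        · push_neg at hcase
          rcases hadm with hadm1 | hadm2
          · exfalso
            have : M = rstar := max_eq_right hadm1
            rw [this] at hMn
            exact absurd hMn (not_le.mpr hcase)
          · have hρ0' : ρ n ≤ ρ 0 := by
              rcases max_cases (ρ 0) rstar with ⟨hm, _⟩ | ⟨hm, hle⟩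
              · rwa [hM, hm] at hMn
              · exfalso; rw [hM, hm] at hMn; exact absurd hMn (not_le.mpr hcase)
            have := hadm2 (ρ n) hcase hρ0'
            rw [hρ_succ n]
            linarith
      · rw [heqn, hr_succ n, hapK (r n) (hr_bdd n).1 (le_trans (hr_bdd n).2 hrstarR)]
        have := hK_mono hrn
        linarith
  -- `‖ξ n - x₀‖ ≤ ρ n` and `‖ξ n - x n‖ ≤ ρ n - r n`
  have hξ_est : ∀ n, ‖ξ n - x₀‖ ≤ ρ n ∧ ‖ξ n - x n‖ ≤ ρ n - r n := by
    intro n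
    induction n with
    | zero =>
      refine ⟨le_of_eq hρ0.symm, ?_⟩
      rw [hx0, hr0, hρ0]
      simp
    | succ n ih =>
      obtain ⟨hmem, hdist⟩ := ih
      obtain ⟨hρn0, hρnM, hrρn⟩ := hρ_bdd n
      have hρnR : ρ n ≤ R := le_trans hρnM hMR
      have heqρ : ρ (n+1) = a + K (ρ n) := by rw [hρ_succ n, hapK (ρ n) hρn0 hρnR]
      have heqr : r (n+1) = a + K (r n) := by
        rw [hr_succ n, hapK (r n) (hr_bdd n).1 (le_trans (hr_bdd n).2 hrstarR)]
      constructor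
      · have hseg := seg_core x₀ R A k' hk'_cont hk'0 hLip' x₀ (ξ n)
          0 (ρ n) le_rfl hρn0 hρnR (by simp) hmem (by simpa using hmem)
        have hAx : ‖A x₀ - x₀‖ = a := ha.symm
        calc ‖ξ (n+1) - x₀‖ = ‖(A (ξ n) - A x₀) + (A x₀ - x₀)‖ := by
              rw [hξ_succ n]; congr 1; abel
          _ ≤ ‖A (ξ n) - A x₀‖ + ‖A x₀ - x₀‖ := norm_add_le _ _
          _ ≤ (∫ t in (0:ℝ)..(ρ n), k' t) + a := add_le_add hseg (le_of_eq hAx)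
          _ = K (ρ n) + a := by rw [hK]
          _ = ρ (n+1) := by rw [heqρ]; ring
      · have hseg := seg_core x₀ R A k' hk'_cont hk'0 hLip' (x n) (ξ n)
          (r n) (ρ n) (hr_bdd n).1 hrρn hρnR (hx_est n).1 hmem hdist
        rw [hξ_succ n, hx_succ n]
        calc ‖A (ξ n) - A (x n)‖ ≤ ∫ t in (r n)..(ρ n), k' t := hseg
          _ = K (ρ n) - K (r n) := (hK_add _ _).symm
          _ = ρ (n+1) - r (n+1) := by rw [heqρ, heqr]; ring
  -- conclusion
  intro n
  calc ‖xstar - ξ n‖ ≤ ‖xstar - x n‖ + ‖x n - ξ n‖ := norm_sub_le_norm_sub_add_norm_sub _ _ _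
    _ ≤ (rstar - r n) + (ρ n - r n) := by
        have := (hξ_est n).2
        rw [norm_sub_rev] at this
        exact add_le_add (hxstar_est n) this
    _ = rstar + ρ n - 2 * r n := by ring
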